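/- Let Π be a family of deterministic stopping policies (functions List O → Bool) whose VC dimension, as Boolean classifiers on List O, is at most d, with d ≥ 1, and let g : List O → ℝ be a reward function. Let x₁, …, xₙ be n full trajectories of horizon H with n·H ≥ d. Then the number of distinct return vectors { (R_π(x₁), …, R_π(xₙ)) : π ∈ Π } ⊆ ℝⁿ is at most (e·n·H/d)^d. -/

import Mathlib

open scoped BigOperators

/-- The `t`-prefix of a full trajectory `x : Fin H → O`, i.e. the list `[x 0, …, x (t-1)]`. -/
def trajPrefix {O : Type*} {H : ℕ} (x : Fin H → O) (t : ℕ) : List O :=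
  (List.ofFn x).take t

open Classical in
/-- The stopping time of policy `π` on full trajectory `x`: the least `t` with
`1 ≤ t ≤ H` such that `π` halts on the `t`-prefix of `x`, and `H` if no such `t` exists. -/
noncomputable def stopTime {O : Type*} (H : ℕ) (π : List O → Bool) (x : Fin H → O) : ℕ :=
  if h : ∃ t, (1 ≤ t ∧ t ≤ H) ∧ π (trajPrefix x t) = true then Nat.find h else H

/-- The return of policy `π` on full trajectory `x` under reward function `g`. -/
noncomputable def policyReturn {O : Type*} {H : ℕ} (g : List O → ℝ) (π : List O → Bool)
    (x : Fin H → O) : ℝ :=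
  g (trajPrefix x (stopTime H π x))

/-- A family `Π` of policies shatters a finite set `S` of lists if every Boolean
labeling of `S` is realized by some member of `Π`. -/
def ShattersLists {O : Type*} (P : Set (List O → Bool)) (S : Finset (List O)) : Prop :=
  ∀ f : List O → Bool, ∃ π ∈ P, ∀ l ∈ S, π l = f l

lemma stopTime_congr {O : Type*} {H : ℕ} (π π' : List O → Bool) (x : Fin H → O)
    (h : ∀ t, 1 ≤ t → t ≤ H → π (trajPrefix x t) = π' (trajPrefix x t)) :
    stopTime H π x = stopTime H π' x := by
  classical
  have hiff : ∀ t, ((1 ≤ t ∧ t ≤ H) ∧ π (trajPrefix x t) = true) ↔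
      ((1 ≤ t ∧ t ≤ H) ∧ π' (trajPrefix x t) = true) := by
    intro t
    constructor <;> rintro ⟨ht, hp⟩
    · exact ⟨ht, by rw [← h t ht.1 ht.2]; exact hp⟩
    · exact ⟨ht, by rw [h t ht.1 ht.2]; exact hp⟩
  unfold stopTime
  by_cases h1 : ∃ t, (1 ≤ t ∧ t ≤ H) ∧ π (trajPrefix x t) = true
  · have h2 : ∃ t, (1 ≤ t ∧ t ≤ H) ∧ π' (trajPrefix x t) = true := by
      obtain ⟨t, ht⟩ := h1; exact ⟨t, (hiff t).1 ht⟩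
    rw [dif_pos h1, dif_pos h2]
    exact le_antisymm (Nat.find_le ((hiff _).2 (Nat.find_spec h2)))
      (Nat.find_le ((hiff _).1 (Nat.find_spec h1)))
  · have h2 : ¬ ∃ t, (1 ≤ t ∧ t ≤ H) ∧ π' (trajPrefix x t) = true := by
      rintro ⟨t, ht⟩; exact h1 ⟨t, (hiff t).2 ht⟩
    rw [dif_neg h1, dif_neg h2]

lemma policyReturn_congr {O : Type*} {H : ℕ} (g : List O → ℝ) (π π' : List O → Bool)
    (x : Fin H → O)
    (h : ∀ t, 1 ≤ t → t ≤ H → π (trajPrefix x t) = π' (trajPrefix x t)) :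
    policyReturn g π x = policyReturn g π' x := by
  unfold policyReturn
  rw [stopTime_congr π π' x h]

lemma sum_choose_le_pow (m d : ℕ) (hd : 1 ≤ d) (hdm : d ≤ m) :
    ((∑ k ∈ Finset.Iic d, m.choose k : ℕ) : ℝ) ≤ (Real.exp 1 * m / d) ^ d := by
  have hm : 0 < m := lt_of_lt_of_le hd hdm
  have hm' : (0 : ℝ) < m := by exact_mod_cast hm
  have hd' : (0 : ℝ) < d := by exact_mod_cast hd
  set s : ℝ := (d : ℝ) / m with hs
  have hs0 : 0 < s := div_pos hd' hm'
  have hs1 : s ≤ 1 := by rw [hs, div_le_one hm']; exact_mod_cast hdm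
  have step1 : (∑ k ∈ Finset.Iic d, (m.choose k : ℝ)) * s ^ d
      ≤ ∑ k ∈ Finset.Iic d, s ^ k * (m.choose k : ℝ) := by
    rw [Finset.sum_mul]
    refine Finset.sum_le_sum fun k hk => ?_
    rw [Finset.mem_Iic] at hk
    rw [mul_comm]
    exact mul_le_mul_of_nonneg_right (pow_le_pow_of_le_one hs0.le hs1 hk) (by positivity)
  have step2 : ∑ k ∈ Finset.Iic d, s ^ k * (m.choose k : ℝ)
      ≤ ∑ k ∈ Finset.range (m + 1), s ^ k * (m.choose k : ℝ) := by
    refine Finset.sum_le_sum_of_subset_of_nonneg ?_ fun k _ _ => by positivity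
    intro k hk
    rw [Finset.mem_Iic] at hk
    rw [Finset.mem_range]
    omega
  have step3 : ∑ k ∈ Finset.range (m + 1), s ^ k * (m.choose k : ℝ) = (s + 1) ^ m := by
    rw [add_pow]
    refine Finset.sum_congr rfl fun k _ => ?_
    rw [one_pow, mul_one]
  have step4 : (s + 1) ^ m ≤ Real.exp (d : ℝ) := by
    have h1 : s + 1 ≤ Real.exp s := by
      have := Real.add_one_le_exp s
      linarith
    calc (s + 1) ^ m ≤ (Real.exp s) ^ m := pow_le_pow_left₀ (by positivity) h1 m
      _ = Real.exp (s * m) := by rw [← Real.exp_nat_mul, mul_comm]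
      _ = Real.exp (d : ℝ) := by rw [hs, div_mul_cancel₀ _ hm'.ne']
  have hexp1 : Real.exp (d : ℝ) = Real.exp 1 ^ d := by
    rw [← Real.exp_nat_mul, mul_one]
  have hchain : (∑ k ∈ Finset.Iic d, (m.choose k : ℝ)) * s ^ d ≤ Real.exp 1 ^ d := by
    rw [← hexp1]
    exact step1.trans (step2.trans (step3.le.trans step4))
  have hsd : (0 : ℝ) < s ^ d := by positivity
  rw [Nat.cast_sum]
  rw [← le_div_iff₀ hsd] at hchain
  refine hchain.trans_eq ?_
  have hdd : ((d : ℝ)) ^ d ≠ 0 := by positivity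
  have hmm : ((m : ℝ)) ^ d ≠ 0 := by positivity
  rw [hs]
  field_simp
  rw [← mul_pow, div_mul_div_comm]
  congr 1
  rw [eq_div_iff (by positivity)]
  ring


def myPre {O : Type*} {H n : ℕ} (x : Fin n → Fin H → O) (p : Fin n × Fin H) : List O :=
  trajPrefix (x p.1) (p.2.val + 1)

def myPat {O : Type*} {H n : ℕ} (x : Fin n → Fin H → O) (π : List O → Bool) :
    Finset (Fin n × Fin H) :=
  Finset.univ.filter fun p => π (myPre x p) = true

open Classical in
noncomputable def myPi {O : Type*} {H n : ℕ} (x : Fin n → Fin H → O)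
    (u : Finset (Fin n × Fin H)) : List O → Bool :=
  fun l => decide (∃ p, p ∈ u ∧ l = myPre x p)

lemma mem_myPat {O : Type*} {H n : ℕ} {x : Fin n → Fin H → O} {π : List O → Bool}
    {p : Fin n × Fin H} : p ∈ myPat x π ↔ π (myPre x p) = true := by
  simp [myPat]

lemma myPi_myPat {O : Type*} {H n : ℕ} (x : Fin n → Fin H → O) (π : List O → Bool)
    (p : Fin n × Fin H) : myPi x (myPat x π) (myPre x p) = π (myPre x p) := by
  classical
  rcases Bool.eq_false_or_eq_true (π (myPre x p)) with h | h
  · rw [h]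
    unfold myPi
    exact decide_eq_true ⟨p, mem_myPat.2 h, rfl⟩
  · rw [h]
    unfold myPi
    refine decide_eq_false ?_
    rintro ⟨q, hq, hpq⟩
    rw [mem_myPat] at hq
    rw [← hpq, h] at hq
    exact Bool.false_ne_true hq


/-- The number of distinct return vectors produced by a VC-dimension-`d` policy class
on `n` full trajectories of horizon `H` is at most `(e·n·H/d)^d`. -/
theorem return_vectors_card_le {O : Type*} {H n d : ℕ} (hH : 1 ≤ H) (hd : 1 ≤ d)
    (P : Set (List O → Bool))
    (hVC : ∀ S : Finset (List O), S.card = d + 1 → ¬ ShattersLists P S)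
    (g : List O → ℝ)
    (x : Fin n → (Fin H → O)) (hnH : d ≤ n * H) :
    ((Set.ncard {v : Fin n → ℝ | ∃ π ∈ P, v = fun i => policyReturn g π (x i)} : ℝ))
      ≤ (Real.exp 1 * n * H / d) ^ d := by
  classical
  have hvec : ∀ π : List O → Bool,
      (fun i => policyReturn g π (x i)) = fun i => policyReturn g (myPi x (myPat x π)) (x i) := by
    intro π
    funext i
    refine policyReturn_congr g π (myPi x (myPat x π)) (x i) fun t ht1 htH => ?_
    have htlt : t - 1 < H := by omega
    have hpre : trajPrefix (x i) t = myPre x (i, ⟨t - 1, htlt⟩) := by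
      unfold myPre
      have hv : (((i, (⟨t - 1, htlt⟩ : Fin H)).2 : Fin H) : ℕ) = t - 1 := rfl
      rw [hv]
      congr 1
      omega
    rw [hpre, myPi_myPat]
  set A : Finset (Finset (Fin n × Fin H)) := (Set.toFinite (myPat x '' P)).toFinset with hA
  have hmemA : ∀ u ∈ A, ∃ π ∈ P, u = myPat x π := by
    intro u hu
    rw [hA, Set.Finite.mem_toFinset] at hu
    obtain ⟨π, hπ, rfl⟩ := hu
    exact ⟨π, hπ, rfl⟩
  -- cardinality of return-vector set bounded by #A
  have h1 : Set.ncard {v : Fin n → ℝ | ∃ π ∈ P, v = fun i => policyReturn g π (x i)}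
      ≤ A.card := by
    have hsub : {v : Fin n → ℝ | ∃ π ∈ P, v = fun i => policyReturn g π (x i)}
        ⊆ (fun u => fun i => policyReturn g (myPi x u) (x i)) '' ↑A := by
      rintro v ⟨π, hπ, rfl⟩
      refine ⟨myPat x π, ?_, (hvec π).symm⟩
      rw [hA, Set.Finite.coe_toFinset]
      exact ⟨π, hπ, rfl⟩
    calc Set.ncard _ ≤ Set.ncard ((fun u => fun i => policyReturn g (myPi x u) (x i)) '' ↑A) :=
          Set.ncard_le_ncard hsub ((A.finite_toSet).image _)
      _ ≤ Set.ncard (↑A : Set (Finset (Fin n × Fin H))) := Set.ncard_image_le A.finite_toSet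
      _ = A.card := Set.ncard_coe_finset A
  -- VC dimension of A
  have hvc : A.vcDim ≤ d := by
    refine Finset.sup_le fun s hs => ?_
    rw [Finset.mem_shatterer] at hs
    by_contra hlt
    push_neg at hlt
    obtain ⟨s', hs's, hcard⟩ := Finset.exists_subset_card_eq (show d + 1 ≤ s.card by omega)
    have hshat := hs.mono_right hs's
    have hinj : Set.InjOn (myPre x) ↑s' := by
      intro p hp q hq hpq
      by_contra hne
      obtain ⟨u, hu, huu⟩ := hshat (Finset.singleton_subset_iff.2 hp)
      obtain ⟨π, hπ, rfl⟩ := hmemA u hu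
      have hpmem : p ∈ s' ∩ myPat x π := by rw [huu]; exact Finset.mem_singleton_self p
      have hqnot : q ∉ s' ∩ myPat x π := by
        rw [huu, Finset.mem_singleton]
        exact fun h => hne h.symm
      apply hqnot
      rw [Finset.mem_inter] at hpmem ⊢
      exact ⟨hq, by rw [mem_myPat, ← hpq]; exact mem_myPat.1 hpmem.2⟩
    refine hVC (s'.image (myPre x)) (by rw [Finset.card_image_of_injOn hinj, hcard]) ?_
    intro flab
    obtain ⟨u, hu, huu⟩ := hshat (Finset.filter_subset (fun p => flab (myPre x p) = true) s')
    obtain ⟨π, hπ, rfl⟩ := hmemA u hu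
    refine ⟨π, hπ, ?_⟩
    intro l hl
    rw [Finset.mem_image] at hl
    obtain ⟨p, hp, rfl⟩ := hl
    have hiff : p ∈ s' ∩ myPat x π ↔ p ∈ s'.filter (fun p => flab (myPre x p) = true) := by
      rw [huu]
    rw [Finset.mem_inter, Finset.mem_filter, mem_myPat] at hiff
    rcases Bool.eq_false_or_eq_true (flab (myPre x p)) with hf | hf
    · rw [hf]
      exact (hiff.2 ⟨hp, hf⟩).2
    · rw [hf]
      rcases Bool.eq_false_or_eq_true (π (myPre x p)) with hb | hb
      · exact absurd (hiff.1 ⟨hp, hb⟩).2 (by rw [hf]; simp)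
      · exact hb
  -- Sauer–Shelah
  have h2 : A.card ≤ ∑ k ∈ Finset.Iic d, (n * H).choose k := by
    calc A.card ≤ A.shatterer.card := Finset.card_le_card_shatterer A
      _ ≤ ∑ k ∈ Finset.Iic A.vcDim, (Fintype.card (Fin n × Fin H)).choose k :=
          Finset.card_shatterer_le_sum_vcDim
      _ ≤ ∑ k ∈ Finset.Iic d, (n * H).choose k := by
          rw [Fintype.card_prod, Fintype.card_fin, Fintype.card_fin]
          exact Finset.sum_le_sum_of_subset (Finset.Iic_subset_Iic.2 hvc)
  have h3 := sum_choose_le_pow (n * H) d hd hnH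
  calc (Set.ncard _ : ℝ) ≤ ((∑ k ∈ Finset.Iic d, (n * H).choose k : ℕ) : ℝ) := by
        exact_mod_cast le_trans h1 h2
    _ ≤ (Real.exp 1 * ((n * H : ℕ) : ℝ) / d) ^ d := h3
    _ = (Real.exp 1 * n * H / d) ^ d := by push_cast; ring
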